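/- Let U : ℝ^d → ℝ be continuously differentiable and let p ∈ ℝ^d be a point with ∇U(p) ≠ 0. Then for all sufficiently small r > 0 the following hold: the set B(p,r) ∖ {x : U(x) = U(p)} has exactly two connected components, namely B(p,r) ∩ {x : U(x) < U(p)} and B(p,r) ∩ {x : U(x) > U(p)}; in particular the set A(p,r) is connected; moreover there exists a continuous path z : [0,1] → B(p,r) with z(0) = p and U(z(t)) < U(p) for all t ∈ (0,1]. -/

import Mathlib

open Metric Set InnerProductSpace
open scoped RealInnerProductSpace

lemma combo_le_max {t A B : ℝ} (ht : t ∈ Set.Icc (0:ℝ) 1) :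
    (1 - t) * A + t * B ≤ max A B := by
  have h1 : (1-t) * A ≤ (1-t) * max A B :=
    mul_le_mul_of_nonneg_left (le_max_left _ _) (by linarith [ht.2])
  have h2 : t * B ≤ t * max A B := mul_le_mul_of_nonneg_left (le_max_right _ _) ht.1
  nlinarith

lemma seg_joinedIn {E : Type*} [NormedAddCommGroup E] [NormedSpace ℝ E] {s : Set E} {a b : E}
    (h : ∀ t : ℝ, t ∈ Set.Icc (0:ℝ) 1 → (1 - t) • a + t • b ∈ s) : JoinedIn s a b := by
  refine ⟨⟨⟨fun t => (1 - (t:ℝ)) • a + (t:ℝ) • b, by continuity⟩, by simp, by simp⟩, ?_⟩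
  intro t
  exact h t t.2

lemma aux_pathconn {E : Type*} [NormedAddCommGroup E] [InnerProductSpace ℝ E]
    (U : E → ℝ) (p g : E) (hg : g ≠ 0) (r : ℝ) (hr : 0 < r)
    (key : ∀ x ∈ ball p r, ∀ y ∈ ball p r,
      U y - U x ≤ ⟪g, y - x⟫_ℝ + (‖g‖ / 8) * ‖y - x‖) :
    IsPathConnected (ball p r ∩ {x | U x < U p}) := by
  set G := ‖g‖ with hGdef
  have hG : 0 < G := norm_pos_iff.mpr hg
  set S₁ : Set E := ball p r ∩ {x | U x < U p} with hS1def
  set S : Set E := {x | x ∈ ball p r ∧ ⟪g, x - p⟫_ℝ + (G/4) * ‖x - p‖ < 0} with hSdef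
  have hpball : p ∈ ball p r := mem_ball_self hr
  have hSsub : S ⊆ S₁ := by
    intro x hx
    obtain ⟨hxb, hxc⟩ := hx
    have hxp : x ≠ p := by
      intro h; rw [h] at hxc; simp at hxc
    have hn : 0 < ‖x - p‖ := by
      rw [norm_pos_iff]; exact sub_ne_zero_of_ne hxp
    have hk := key p hpball x hxb
    exact ⟨hxb, by simp only [Set.mem_setOf_eq]; nlinarith [hk]⟩
  have hSeg : ∀ a ∈ S, ∀ b ∈ S, ∀ t : ℝ, t ∈ Set.Icc (0:ℝ) 1 →
      (1 - t) • a + t • b ∈ S := by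
    intro a ha b hb t ht
    have hz : (1 - t) • a + t • b - p = (1 - t) • (a - p) + t • (b - p) := by module
    have hinner : ⟪g, (1 - t) • a + t • b - p⟫_ℝ
        = (1 - t) * ⟪g, a - p⟫_ℝ + t * ⟪g, b - p⟫_ℝ := by
      rw [hz, inner_add_right, real_inner_smul_right, real_inner_smul_right]
    have hnorm : ‖(1 - t) • a + t • b - p‖ ≤ (1 - t) * ‖a - p‖ + t * ‖b - p‖ := by
      rw [hz]
      calc ‖(1 - t) • (a - p) + t • (b - p)‖ ≤ ‖(1-t) • (a-p)‖ + ‖t • (b-p)‖ := norm_add_le _ _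
        _ = (1-t) * ‖a-p‖ + t * ‖b-p‖ := by
            rw [norm_smul, norm_smul, Real.norm_eq_abs, Real.norm_eq_abs,
              abs_of_nonneg (by linarith [ht.2] : (0:ℝ) ≤ 1 - t), abs_of_nonneg ht.1]
    constructor
    · rw [mem_ball, dist_eq_norm]
      calc ‖(1 - t) • a + t • b - p‖ ≤ (1 - t) * ‖a - p‖ + t * ‖b - p‖ := hnorm
        _ ≤ max ‖a - p‖ ‖b - p‖ := combo_le_max ht
        _ < r := by
            apply max_lt
            · rw [← dist_eq_norm]; exact ha.1
            · rw [← dist_eq_norm]; exact hb.1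
    · have hA : ⟪g, a - p⟫_ℝ + (G/4) * ‖a - p‖ < 0 := ha.2
      have hB : ⟪g, b - p⟫_ℝ + (G/4) * ‖b - p‖ < 0 := hb.2
      have hle : ⟪g, (1 - t) • a + t • b - p⟫_ℝ + (G/4) * ‖(1 - t) • a + t • b - p‖
          ≤ (1 - t) * (⟪g, a - p⟫_ℝ + (G/4) * ‖a - p‖)
            + t * (⟪g, b - p⟫_ℝ + (G/4) * ‖b - p‖) := by
        rw [hinner]
        nlinarith [hnorm, hG, ht.1, ht.2]
      calc ⟪g, (1 - t) • a + t • b - p⟫_ℝ + (G/4) * ‖(1 - t) • a + t • b - p‖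
          ≤ _ := hle
        _ ≤ max _ _ := combo_le_max ht
        _ < 0 := max_lt hA hB
  set q : E := p + (r / (2 * G)) • (-g) with hqdef
  have hqp : q - p = -(r / (2 * G)) • g := by rw [hqdef]; module
  have hqinner : ⟪g, q - p⟫_ℝ = -(r / (2 * G)) * G^2 := by
    rw [hqp, real_inner_smul_right, real_inner_self_eq_norm_sq]
  have hqnorm : ‖q - p‖ = r / 2 := by
    rw [hqp, norm_smul, Real.norm_eq_abs, abs_neg, abs_of_nonneg (by positivity)]
    field_simp; ring
  have hqS : q ∈ S := by
    refine ⟨?_, ?_⟩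
    · rw [mem_ball, dist_eq_norm, hqnorm]; linarith
    · rw [hqinner, hqnorm]
      have h1 : -(r / (2 * G)) * G ^ 2 = -(r * G / 2) := by field_simp
      rw [h1]; nlinarith
  have hmain : ∀ x ∈ S₁, JoinedIn S₁ x q := by
    intro x hx
    obtain ⟨hxb, hxU⟩ := hx
    have hxU' : U x < U p := hxU
    have hxp : x ≠ p := by intro h; rw [h] at hxU'; exact lt_irrefl _ hxU'
    have hn : 0 < ‖x - p‖ := by rw [norm_pos_iff]; exact sub_ne_zero_of_ne hxp
    set m : E := p + (‖x - p‖ / G) • (-g) with hmdef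
    have hmp : m - p = -(‖x - p‖ / G) • g := by rw [hmdef]; module
    have hminner : ⟪g, m - p⟫_ℝ = -(‖x - p‖ * G) := by
      rw [hmp, real_inner_smul_right, real_inner_self_eq_norm_sq]
      field_simp; ring
    have hmnorm : ‖m - p‖ = ‖x - p‖ := by
      rw [hmp, norm_smul, Real.norm_eq_abs, abs_neg, abs_of_nonneg (by positivity)]
      field_simp; exact hGdef.symm
    have hmS : m ∈ S := by
      refine ⟨?_, ?_⟩
      · rw [mem_ball, dist_eq_norm, hmnorm, ← dist_eq_norm]; exact hxb
      · rw [hminner, hmnorm]; nlinarith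
    have hxm : JoinedIn S₁ x m := by
      by_cases hcone : ⟪g, x - p⟫_ℝ + (G/4) * ‖x - p‖ < 0
      · exact seg_joinedIn fun t ht => hSsub (hSeg x ⟨hxb, hcone⟩ m hmS t ht)
      · push_neg at hcone
        apply seg_joinedIn
        intro t ht
        set z := (1 - t) • x + t • m with hzdef
        have hzx : z - x = t • (m - x) := by rw [hzdef]; module
        have hzp : z - p = (1 - t) • (x - p) + t • (m - p) := by rw [hzdef]; module
        have hznorm : ‖z - p‖ < r := by
          rw [hzp]
          calc ‖(1 - t) • (x - p) + t • (m - p)‖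
              ≤ ‖(1-t) • (x-p)‖ + ‖t • (m-p)‖ := norm_add_le _ _
            _ = (1-t) * ‖x-p‖ + t * ‖m-p‖ := by
                rw [norm_smul, norm_smul, Real.norm_eq_abs, Real.norm_eq_abs,
                  abs_of_nonneg (by linarith [ht.2] : (0:ℝ) ≤ 1 - t), abs_of_nonneg ht.1]
            _ = ‖x - p‖ := by rw [hmnorm]; ring
            _ < r := by rw [← dist_eq_norm]; exact hxb
        have hzb : z ∈ ball p r := by rw [mem_ball, dist_eq_norm]; exact hznorm
        refine ⟨hzb, ?_⟩
        have hk := key x hxb z hzb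
        have hinner2 : ⟪g, z - x⟫_ℝ = t * (⟪g, m - p⟫_ℝ - ⟪g, x - p⟫_ℝ) := by
          rw [hzx, real_inner_smul_right]
          congr 1
          rw [show m - x = (m - p) - (x - p) by abel, inner_sub_right]
        have hnorm2 : ‖z - x‖ ≤ t * (2 * ‖x - p‖) := by
          rw [hzx, norm_smul, Real.norm_eq_abs, abs_of_nonneg ht.1]
          apply mul_le_mul_of_nonneg_left _ ht.1
          calc ‖m - x‖ = ‖(m - p) - (x - p)‖ := by rw [show m - x = (m - p) - (x - p) by abel]
            _ ≤ ‖m - p‖ + ‖x - p‖ := norm_sub_le _ _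
            _ = 2 * ‖x - p‖ := by rw [hmnorm]; ring
        have : U z - U x ≤ 0 := by
          calc U z - U x ≤ ⟪g, z - x⟫_ℝ + (G/8) * ‖z - x‖ := hk
            _ ≤ t * (⟪g, m - p⟫_ℝ - ⟪g, x - p⟫_ℝ) + (G/8) * (t * (2 * ‖x - p‖)) := by
                rw [hinner2]
                have : (G/8) * ‖z - x‖ ≤ (G/8) * (t * (2 * ‖x - p‖)) :=
                  mul_le_mul_of_nonneg_left hnorm2 (by positivity)
                linarith
            _ ≤ 0 := by
                rw [hminner]
                nlinarith [mul_nonneg ht.1 hcone, mul_nonneg (mul_nonneg ht.1 hG.le) hn.le]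
        show U z < U p
        linarith
    exact hxm.trans (seg_joinedIn fun t ht => hSsub (hSeg m hmS q hqS t ht))
  exact ⟨q, hSsub hqS, fun y hy => JoinedIn.symm (hmain y hy)⟩

lemma key_exists {E : Type*} [NormedAddCommGroup E] [InnerProductSpace ℝ E] [CompleteSpace E]
    (U : E → ℝ) (hU : ContDiff ℝ 1 U) (p : E) (hp : gradient U p ≠ 0) :
    ∃ r₀ > (0:ℝ), ∀ x ∈ ball p r₀, ∀ y ∈ ball p r₀,
      |U y - U x - ⟪gradient U p, y - x⟫_ℝ| ≤ (‖gradient U p‖ / 8) * ‖y - x‖ := by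
  set g := gradient U p with hgdef
  have hG : 0 < ‖g‖ := norm_pos_iff.mpr hp
  have hε : 0 < ‖g‖ / 8 := by positivity
  have hcont : Continuous (fderiv ℝ U) := hU.continuous_fderiv one_ne_zero
  obtain ⟨δ, hδ, hd⟩ := Metric.continuousAt_iff.mp hcont.continuousAt (‖g‖/8) hε
  refine ⟨δ, hδ, ?_⟩
  intro x hx y hy
  have hdiff : Differentiable ℝ U := hU.differentiable one_ne_zero
  have hA : fderiv ℝ U p = toDual ℝ E g := by
    rw [hgdef, gradient, LinearIsometryEquiv.apply_symm_apply]
  have hder : ∀ z ∈ ball p δ, HasFDerivWithinAt (fun w => U w - fderiv ℝ U p w)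
      (fderiv ℝ U z - fderiv ℝ U p) (ball p δ) z := fun z _ =>
    ((hdiff z).hasFDerivAt.sub ((fderiv ℝ U p).hasFDerivAt)).hasFDerivWithinAt
  have hbound : ∀ z ∈ ball p δ, ‖fderiv ℝ U z - fderiv ℝ U p‖ ≤ ‖g‖/8 := by
    intro z hz
    have := hd (mem_ball.mp hz)
    rw [dist_eq_norm] at this
    exact this.le
  have := (convex_ball p δ).norm_image_sub_le_of_norm_hasFDerivWithin_le hder hbound hx hy
  calc |U y - U x - ⟪g, y - x⟫_ℝ|
      = ‖(U y - fderiv ℝ U p y) - (U x - fderiv ℝ U p x)‖ := by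
        rw [Real.norm_eq_abs]
        congr 1
        rw [hA]
        simp only [toDual_apply_apply]
        rw [inner_sub_right]
        ring
    _ ≤ (‖g‖/8) * ‖y - x‖ := this

lemma comp_eq {X : Type*} [TopologicalSpace X] {T S₁ S₂ : Set X}
    (hT : T = S₁ ∪ S₂) (h1 : IsOpen S₁) (h2 : IsOpen S₂)
    (hdisj : ∀ y, y ∈ S₁ → y ∈ S₂ → False) (hconn : IsPreconnected S₁)
    {x : X} (hx : x ∈ S₁) : connectedComponentIn T x = S₁ := by
  have hxT : x ∈ T := hT ▸ Or.inl hx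
  have hsub : S₁ ⊆ connectedComponentIn T x :=
    hconn.subset_connectedComponentIn hx (hT ▸ subset_union_left)
  refine Subset.antisymm ?_ hsub
  intro y hy
  by_contra hy1
  have hyS2 : y ∈ S₂ := by
    have := connectedComponentIn_subset T x hy
    rw [hT] at this
    exact this.resolve_left hy1
  have hpc := isPreconnected_connectedComponentIn (x := x) (F := T)
  have hcov : connectedComponentIn T x ⊆ S₁ ∪ S₂ := hT ▸ connectedComponentIn_subset T x
  obtain ⟨z, hz, hz1, hz2⟩ := hpc S₁ S₂ h1 h2 hcov
    ⟨x, mem_connectedComponentIn hxT, hx⟩ ⟨y, hy, hyS2⟩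
  exact hdisj z hz1 hz2



/-- `T` has exactly two connected components, namely `S₁` and `S₂`. -/
def ExactlyTwoComponents {X : Type*} [TopologicalSpace X] (T S₁ S₂ : Set X) : Prop :=
  S₁.Nonempty ∧ S₂.Nonempty ∧ S₁ ≠ S₂ ∧
    (∀ x ∈ S₁, connectedComponentIn T x = S₁) ∧
    (∀ x ∈ S₂, connectedComponentIn T x = S₂) ∧
    ∀ x ∈ T, connectedComponentIn T x = S₁ ∨ connectedComponentIn T x = S₂

/-- Let `U : ℝ^d → ℝ` be `C¹` and let `p` be a point with `∇U(p) ≠ 0`.  For all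
sufficiently small `r > 0`: the set `B(p, r) ∖ {U = U p}` has exactly two connected components,
namely `B(p, r) ∩ {U < U p}` and `B(p, r) ∩ {U > U p}`; in particular the set
`A(p, r) = (B(p, r) ∖ {p}) ∩ {U < U p}` is connected; moreover there is a continuous path
`z : [0, 1] → B(p, r)` with `z 0 = p` and `U (z t) < U p` for `t ∈ (0, 1]`. -/
theorem level_set_divides_ball_near_noncritical_point
    (d : ℕ) (hd : 1 ≤ d) (U : EuclideanSpace ℝ (Fin d) → ℝ)
    (hU : ContDiff ℝ 1 U) (p : EuclideanSpace ℝ (Fin d)) (hp : gradient U p ≠ 0) :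
    ∃ r₀ > (0 : ℝ), ∀ r : ℝ, 0 < r → r ≤ r₀ →
      ExactlyTwoComponents
        (Metric.ball p r \ {x | U x = U p})
        (Metric.ball p r ∩ {x | U x < U p})
        (Metric.ball p r ∩ {x | U p < U x}) ∧
      IsConnected ((Metric.ball p r \ {p}) ∩ {y | U y < U p}) ∧
      ∃ z : ℝ → EuclideanSpace ℝ (Fin d),
        ContinuousOn z (Set.Icc 0 1) ∧ z 0 = p ∧
        (∀ t ∈ Set.Icc (0 : ℝ) 1, z t ∈ Metric.ball p r) ∧
        ∀ t ∈ Set.Ioc (0 : ℝ) 1, U (z t) < U p := by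
  
  obtain ⟨r₀, hr₀, hkey⟩ := key_exists U hU p hp
  set g := gradient U p with hgdef
  have hG : 0 < ‖g‖ := norm_pos_iff.mpr hp
  refine ⟨r₀, hr₀, ?_⟩
  intro r hr hrr₀
  have hbsub : ball p r ⊆ ball p r₀ := ball_subset_ball hrr₀
  have keyr : ∀ x ∈ ball p r, ∀ y ∈ ball p r,
      |U y - U x - ⟪g, y - x⟫_ℝ| ≤ (‖g‖ / 8) * ‖y - x‖ :=
    fun x hx y hy => hkey x (hbsub hx) y (hbsub hy)
  -- path connectedness of the two pieces
  have hS1pc : IsPathConnected (ball p r ∩ {x | U x < U p}) := by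
    apply aux_pathconn U p g hp r hr
    intro x hx y hy
    have h := keyr x hx y hy
    have := (abs_le.mp h).2
    linarith
  have hS2pc : IsPathConnected (ball p r ∩ {x | U p < U x}) := by
    have h2 : IsPathConnected (ball p r ∩ {x | (fun w => -U w) x < (fun w => -U w) p}) := by
      apply aux_pathconn (fun w => -U w) p (-g) (neg_ne_zero.mpr hp) r hr
      intro x hx y hy
      have h := keyr x hx y hy
      have h1 := (abs_le.mp h).1
      rw [inner_neg_left, norm_neg]
      show -U y - -U x ≤ _
      linarith
    have hset : {x : EuclideanSpace ℝ (Fin d) | (fun w => -U w) x < (fun w => -U w) p}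
        = {x | U p < U x} := by
      ext x; simp only [Set.mem_setOf_eq, neg_lt_neg_iff]
    rwa [hset] at h2
  set S₁ := ball p r ∩ {x | U x < U p} with hS1def
  set S₂ := ball p r ∩ {x | U p < U x} with hS2def
  set T := ball p r \ {x | U x = U p} with hTdef
  have hT : T = S₁ ∪ S₂ := by
    ext x
    simp only [hTdef, hS1def, hS2def, Set.mem_diff, Set.mem_inter_iff, Set.mem_union,
      Set.mem_setOf_eq]
    constructor
    · rintro ⟨hb, hne⟩
      rcases lt_or_gt_of_ne hne with h | h
      · exact Or.inl ⟨hb, h⟩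
      · exact Or.inr ⟨hb, h⟩
    · rintro (⟨hb, h⟩ | ⟨hb, h⟩)
      · exact ⟨hb, ne_of_lt h⟩
      · exact ⟨hb, ne_of_gt h⟩
  have hUc : Continuous U := hU.continuous
  have h1open : IsOpen S₁ := isOpen_ball.inter (isOpen_lt hUc continuous_const)
  have h2open : IsOpen S₂ := isOpen_ball.inter (isOpen_lt continuous_const hUc)
  have hdisj : ∀ y, y ∈ S₁ → y ∈ S₂ → False :=
    by
    intro y h1 h2
    have ha : U y < U p := h1.2
    have hb : U p < U y := h2.2
    linarith
  have hT' : T = S₂ ∪ S₁ := by rw [hT, Set.union_comm]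
  have hc1 : IsConnected S₁ := hS1pc.isConnected
  have hc2 : IsConnected S₂ := hS2pc.isConnected
  obtain ⟨a1, ha1⟩ := hc1.nonempty
  obtain ⟨a2, ha2⟩ := hc2.nonempty
  refine ⟨⟨⟨a1, ha1⟩, ⟨a2, ha2⟩, ?_, ?_, ?_, ?_⟩, ?_, ?_⟩
  · -- S₁ ≠ S₂
    intro heq
    exact hdisj a1 ha1 (heq ▸ ha1)
  · intro x hx
    exact comp_eq hT h1open h2open hdisj hc1.isPreconnected hx
  · intro x hx
    exact comp_eq hT' h2open h1open (fun y h2 h1 => hdisj y h1 h2)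
      hc2.isPreconnected hx
  · intro x hx
    rw [hT] at hx
    rcases hx with hx | hx
    · exact Or.inl (comp_eq hT h1open h2open hdisj hc1.isPreconnected hx)
    · exact Or.inr (comp_eq hT' h2open h1open (fun y h2 h1 => hdisj y h1 h2)
        hc2.isPreconnected hx)
  · -- A(p,r) connected
    have hA : (ball p r \ {p}) ∩ {y | U y < U p} = S₁ := by
      ext x
      simp only [Set.mem_inter_iff, Set.mem_diff, Set.mem_singleton_iff, hS1def,
        Set.mem_setOf_eq]
      constructor
      · rintro ⟨⟨hb, _⟩, hlt⟩; exact ⟨hb, hlt⟩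
      · rintro ⟨hb, hlt⟩
        refine ⟨⟨hb, ?_⟩, hlt⟩
        intro h; rw [h] at hlt; exact lt_irrefl _ hlt
    rw [hA]
    exact hc1
  · -- the path
    refine ⟨fun t => p + ((t * (r / 2)) / ‖g‖) • (-g), ?_, by simp, ?_, ?_⟩
    · apply Continuous.continuousOn
      exact continuous_const.add ((((continuous_id.mul continuous_const).div_const _).smul continuous_const))
    · intro t ht
      rw [mem_ball, dist_eq_norm]
      have : p + ((t * (r / 2)) / ‖g‖) • (-g) - p = ((t * (r / 2)) / ‖g‖) • (-g) := by abel
      rw [this, norm_smul, norm_neg, Real.norm_eq_abs,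
        abs_of_nonneg (div_nonneg (mul_nonneg ht.1 (by linarith)) (norm_nonneg _))]
      rw [div_mul_cancel₀ _ (ne_of_gt hG)]
      nlinarith [ht.1, ht.2]
    · intro t ht
      set c := (t * (r / 2)) / ‖g‖ with hcdef
      have hc : 0 < c := by
        apply div_pos _ hG
        nlinarith [ht.1]
      have hzp : p + c • (-g) - p = -c • g := by rw [smul_neg, neg_smul]; abel
      have hznorm : ‖p + c • (-g) - p‖ = c * ‖g‖ := by
        rw [hzp, norm_smul, Real.norm_eq_abs, abs_neg, abs_of_nonneg hc.le]
      have hzb : p + c • (-g) ∈ ball p r := by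
        rw [mem_ball, dist_eq_norm, hznorm, hcdef, div_mul_cancel₀ _ (ne_of_gt hG)]
        nlinarith [ht.1, ht.2]
      have hk := keyr p (mem_ball_self hr) (p + c • (-g)) hzb
      have hiner : ⟪g, p + c • (-g) - p⟫_ℝ = -c * ‖g‖^2 := by
        rw [hzp, real_inner_smul_right, real_inner_self_eq_norm_sq]
        try ring
      have h2 := (abs_le.mp hk).2
      rw [hiner, hznorm] at h2
      show U (p + c • (-g)) < U p
      nlinarith [mul_pos hc (mul_pos hG hG), hG, hc]
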